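/- If G = lim← ∗_{i=0}^n ℤ (inverse limit of free products of n+1 copies of ℤ along the canonical projection bonding maps), then the abelianization functor composed with the quotient by R_ℤ applied to G yields ℤ^ω; i.e., F(G₁) ≅ ℤ^ω where F(G) = Ab(G)/R_ℤ(Ab(G)). -/

import Mathlib

/-- The bonding map ∗_{i=0}^{n+1} ℤ → ∗_{i=0}^n ℤ killing the last free factor,
realized on free groups (the free product of k copies of ℤ is the free group of rank k). -/
def bonding (n : ℕ) : FreeGroup (Fin (n + 2)) →* FreeGroup (Fin (n + 1)) :=
  FreeGroup.lift (fun i => if h : (i : ℕ) < n + 1 then FreeGroup.of ⟨i, h⟩ else 1)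

/-- G₁, the inverse limit of the free products ∗_{i=0}^n ℤ along the projections. -/
def G1 : Subgroup (∀ n, FreeGroup (Fin (n + 1))) where
  carrier := {f | ∀ n, bonding n (f (n + 1)) = f n}
  one_mem' := by intro n; simp
  mul_mem' := by intro a b ha hb n; simp [map_mul, ha n, hb n]
  inv_mem' := by intro a ha n; simp [map_inv, ha n]

/-! ### Exponent sums -/

/-- Exponent sum of the generator indexed `j`, at level `n`. -/
def tau (j n : ℕ) : FreeGroup (Fin (n + 1)) →* Multiplicative ℤ :=
  FreeGroup.lift (fun i => Multiplicative.ofAdd (if (i : ℕ) = j then 1 else 0))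

lemma tau_of (j n : ℕ) (i : Fin (n + 1)) :
    tau j n (FreeGroup.of i) = Multiplicative.ofAdd (if (i : ℕ) = j then 1 else 0) :=
  FreeGroup.lift_apply_of

lemma tau_comp_bonding (j n : ℕ) (hj : j ≤ n) :
    (tau j n).comp (bonding n) = tau j (n + 1) := by
  apply FreeGroup.ext_hom
  intro i
  simp only [MonoidHom.comp_apply, bonding, FreeGroup.lift_apply_of]
  by_cases h : (i : ℕ) < n + 1
  · rw [dif_pos h, tau_of, tau_of]
  · rw [dif_neg h, map_one, tau_of]
    have hi : (i : ℕ) = n + 1 := by omega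
    rw [hi]
    have : ¬(n + 1 = j) := by omega
    simp [this]

lemma coh (g : ∀ n, FreeGroup (Fin (n + 1))) (hg : g ∈ G1) (n : ℕ) :
    bonding n (g (n + 1)) = g n := hg n

lemma tau_stable (g : ∀ n, FreeGroup (Fin (n + 1))) (hg : g ∈ G1)
    (j n : ℕ) (hj : j ≤ n) : tau j n (g n) = tau j j (g j) := by
  induction n with
  | zero =>
    have : j = 0 := by omega
    subst this; rfl
  | succ n ih =>
    rcases Nat.lt_succ_iff_lt_or_eq.mp (Nat.lt_succ_of_le hj) with h | h
    · have hj' : j ≤ n := by omega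
      rw [← coh g hg n, ← MonoidHom.comp_apply, tau_comp_bonding j n hj'] at ih
      exact ih hj'
    · subst h; rfl

/-- The `j`-th exponent-sum homomorphism on `G1`. -/
def coordHom (j : ℕ) : G1 →* Multiplicative ℤ :=
  (tau j j).comp ((Pi.evalMonoidHom _ j).comp G1.subtype)

/-- The total exponent-sum homomorphism `G1 → ℤ^ω`. -/
def phi : G1 →* (ℕ → Multiplicative ℤ) := Pi.monoidHom coordHom

lemma phi_apply (g : G1) (j : ℕ) : phi g j = tau j j ((g : ∀ n, FreeGroup (Fin (n + 1))) j) :=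
  rfl

/-! ### Surjectivity of `phi` -/

/-- A word with prescribed exponents. -/
def wrd (a : ℕ → ℤ) (n : ℕ) : FreeGroup (Fin (n + 1)) :=
  ((List.finRange (n + 1)).map (fun i : Fin (n + 1) => FreeGroup.of i ^ a i.val)).prod

lemma wrd_mem (a : ℕ → ℤ) : wrd a ∈ G1 := by
  intro n
  rw [wrd, wrd, List.finRange_succ_last, List.map_append, List.prod_append,
    map_mul, map_list_prod, List.map_map, List.map_map]
  have h1 : ((⇑(bonding n) ∘ fun i : Fin (n + 2) => FreeGroup.of i ^ a i.val) ∘ Fin.castSucc)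
      = fun i : Fin (n + 1) => FreeGroup.of i ^ a i.val := by
    funext i
    simp only [Function.comp_apply, map_zpow, bonding, FreeGroup.lift_apply_of]
    have hi : ((Fin.castSucc i : Fin (n + 2)) : ℕ) < n + 1 := by simp [i.isLt]
    rw [dif_pos hi]
    congr 1
  rw [h1]
  have h3 : bonding n (FreeGroup.of (Fin.last (n + 1))) = 1 := by
    rw [bonding, FreeGroup.lift_apply_of, dif_neg (by simp)]
  simp [h3]

lemma tau_wrd (a : ℕ → ℤ) (j n : ℕ) (hj : j ≤ n) :
    tau j n (wrd a n) = Multiplicative.ofAdd (a j) := by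
  rw [wrd, map_list_prod, List.map_map, ← Fin.prod_univ_def]
  apply Multiplicative.toAdd.injective
  rw [toAdd_prod]
  have h1 : ∀ i : Fin (n + 1),
      Multiplicative.toAdd ((tau j n ∘ fun i : Fin (n+1) => FreeGroup.of i ^ a i.val) i)
        = if i = (⟨j, by omega⟩ : Fin (n + 1)) then a i.val else 0 := by
    intro i
    simp only [Function.comp_apply]
    rw [map_zpow, toAdd_zpow, tau_of]
    have : ((i : ℕ) = j) = (i = (⟨j, by omega⟩ : Fin (n + 1))) := by
      simp [Fin.ext_iff]
    simp only [toAdd_ofAdd, smul_eq_mul, mul_ite, mul_one, mul_zero, this]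
  rw [Finset.sum_congr rfl (fun i _ => h1 i), Finset.sum_ite_eq' Finset.univ]
  simp

lemma phi_surjective : Function.Surjective phi := by
  intro a
  refine ⟨⟨wrd (fun j => Multiplicative.toAdd (a j)), wrd_mem _⟩, ?_⟩
  funext j
  rw [phi_apply]
  change tau j j (wrd (fun j => Multiplicative.toAdd (a j)) j) = a j
  rw [tau_wrd _ j j le_rfl]
  rfl

/-! ### Constant elements and sections -/

/-- The "constant" element of `G1` whose `n`-th coordinate is the generator `i` (when defined). -/
def konst (i : ℕ) : G1 :=
  ⟨fun n => if h : i < n + 1 then FreeGroup.of ⟨i, h⟩ else 1, by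
    intro n
    dsimp only
    by_cases h : i < n + 1
    · rw [dif_pos (show i < n + 2 by omega), dif_pos h, bonding, FreeGroup.lift_apply_of,
        dif_pos (show ((⟨i, show i < n + 2 by omega⟩ : Fin (n + 2)) : ℕ) < n + 1 from h)]
    · by_cases h2 : i < n + 2
      · rw [dif_pos h2, dif_neg h, bonding, FreeGroup.lift_apply_of, dif_neg (by simpa using h)]
      · rw [dif_neg h2, dif_neg h, map_one]⟩

/-- A homomorphic section of the `N`-th projection. -/
def sec (N : ℕ) : FreeGroup (Fin (N + 1)) →* G1 :=
  FreeGroup.lift (fun i => konst i.val)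

lemma sec_val (N : ℕ) (x : FreeGroup (Fin (N + 1))) :
    ((sec N x : ∀ n, FreeGroup (Fin (n + 1))) N) = x := by
  have : ((Pi.evalMonoidHom (fun n => FreeGroup (Fin (n + 1))) N).comp
      (G1.subtype.comp (sec N))) = MonoidHom.id _ := by
    apply FreeGroup.ext_hom
    intro i
    simp only [MonoidHom.comp_apply, MonoidHom.id_apply, sec, FreeGroup.lift_apply_of]
    show ((konst i.val : G1) : ∀ n, FreeGroup (Fin (n + 1))) N = FreeGroup.of i
    rw [konst]
    simp only [Subgroup.coe_mk]
    rw [dif_pos i.isLt]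
  exact DFunLike.congr_fun this x

lemma hom_eq_one (N : ℕ) (ψ : FreeGroup (Fin (N + 1)) →* Multiplicative ℤ)
    (x : FreeGroup (Fin (N + 1))) (hx : ∀ j : Fin (N + 1), tau j.val N x = 1) : ψ x = 1 := by
  have hψ : ψ = ∏ i : Fin (N + 1),
      (zpowersHom (Multiplicative ℤ) (ψ (FreeGroup.of i))).comp (tau i.val N) := by
    apply FreeGroup.ext_hom
    intro i'
    rw [MonoidHom.finset_prod_apply]
    have h1 : ∀ i : Fin (N + 1),
        ((zpowersHom (Multiplicative ℤ) (ψ (FreeGroup.of i))).comp (tau i.val N))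
            (FreeGroup.of i')
          = if i = i' then ψ (FreeGroup.of i) else 1 := by
      intro i
      rw [MonoidHom.comp_apply, tau_of, zpowersHom_apply, toAdd_ofAdd]
      by_cases h : i = i'
      · have hc : (i' : ℕ) = (i : ℕ) := by rw [h]
        simp [h, hc]
      · have hc : ¬((i' : ℕ) = (i : ℕ)) := fun hh => h (Fin.ext hh.symm)
        simp [h, hc]
    rw [Finset.prod_congr rfl (fun i _ => h1 i), Finset.prod_ite_eq']
    simp
  rw [hψ, MonoidHom.finset_prod_apply]
  have h2 : ∀ i : Fin (N + 1),
      ((zpowersHom (Multiplicative ℤ) (ψ (FreeGroup.of i))).comp (tau i.val N)) x = 1 := by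
    intro i
    rw [MonoidHom.comp_apply, hx i, zpowersHom_apply]
    simp
  rw [Finset.prod_congr rfl (fun i _ => h2 i)]
  simp

lemma val_eq_one_down (g : G1) :
    ∀ n, (g : ∀ n, FreeGroup (Fin (n + 1))) n = 1 →
      ∀ m, m ≤ n → (g : ∀ n, FreeGroup (Fin (n + 1))) m = 1 := by
  intro n
  induction n with
  | zero =>
    intro h m hm
    have : m = 0 := by omega
    rwa [this]
  | succ n ih =>
    intro h m hm
    rcases Nat.lt_succ_iff_lt_or_eq.mp (Nat.lt_succ_of_le hm) with h' | h'
    · refine ih ?_ m (by omega)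
      have := g.2 n
      rw [show ((g : ∀ n, FreeGroup (Fin (n + 1))) (n + 1)) = 1 from h] at this
      rw [← this, map_one]
    · rwa [h']

/-! ### The arithmetic core of the Specker-type argument -/

/-- `SD b k = (S k, D k)` with `S 0 = 0`, `D 0 = 1`, `S (k+1) = S k + D k * b k`,
`D (k+1) = D k * (2 * |S (k+1)| + 2)`. -/
def SD (b : ℕ → ℤ) : ℕ → ℤ × ℤ
  | 0 => (0, 1)
  | k + 1 =>
    ((SD b k).1 + (SD b k).2 * b k,
      (SD b k).2 * (2 * |(SD b k).1 + (SD b k).2 * b k| + 2))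

/-- The divisor sequence used in the construction. -/
def df (b : ℕ → ℤ) (k : ℕ) : ℤ := 2 * |(SD b (k + 1)).1| + 2

lemma SD_fst_succ (b : ℕ → ℤ) (k : ℕ) :
    (SD b (k + 1)).1 = (SD b k).1 + (SD b k).2 * b k := rfl

lemma SD_snd_succ (b : ℕ → ℤ) (k : ℕ) :
    (SD b (k + 1)).2 = (SD b k).2 * df b k := by
  rw [df, SD_fst_succ]; rfl

lemma SD_snd_pos (b : ℕ → ℤ) (k : ℕ) : 0 < (SD b k).2 := by
  induction k with
  | zero => norm_num [SD]
  | succ k ih =>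
    rw [SD_snd_succ, df]
    have h := abs_nonneg ((SD b (k + 1)).1)
    nlinarith

lemma SD_snd_ge (b : ℕ → ℤ) (k : ℕ) : (k : ℤ) + 1 ≤ (SD b k).2 := by
  induction k with
  | zero => norm_num [SD]
  | succ k ih =>
    rw [SD_snd_succ, df]
    have h := abs_nonneg ((SD b (k + 1)).1)
    push_cast
    nlinarith

lemma abs_SD_fst_lt (b : ℕ → ℤ) (k : ℕ) :
    2 * |(SD b (k + 1)).1| < (SD b (k + 1)).2 := by
  rw [SD_snd_succ, df]
  have h1 := SD_snd_pos b k
  have h2 := abs_nonneg ((SD b (k + 1)).1)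
  nlinarith

lemma SD_snd_le_succ (b : ℕ → ℤ) (k : ℕ) : (SD b k).2 ≤ (SD b (k + 1)).2 := by
  rw [SD_snd_succ, df]
  have h1 := SD_snd_pos b k
  have h2 := abs_nonneg ((SD b (k + 1)).1)
  nlinarith

lemma no_such_m (b : ℕ → ℤ) (hb : ∀ k, b k ≠ 0) (m : ℕ → ℤ)
    (hm : ∀ k, m k = b k + df b k * m (k + 1)) : False := by
  have key : ∀ K, m 0 = (SD b K).1 + (SD b K).2 * m K := by
    intro K
    induction K with
    | zero => norm_num [SD]
    | succ K ih =>
      rw [ih, hm K, SD_fst_succ, SD_snd_succ]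
      ring
  -- a stage where `m 0` is pinned down
  have pin : ∀ J, 2 * |m 0| < (SD b (J + 1)).2 → m 0 = (SD b (J + 1)).1 := by
    intro J hJ
    have hk := key (J + 1)
    have h1 := abs_SD_fst_lt b J
    have hD := SD_snd_pos b (J + 1)
    by_cases hmz : m (J + 1) = 0
    · rw [hmz, mul_zero, add_zero] at hk
      exact hk
    · exfalso
      have h2 : 1 ≤ |m (J + 1)| := Int.one_le_abs (by omega)
      have h3 : (SD b (J + 1)).2 ≤ |(SD b (J + 1)).2 * m (J + 1)| := by
        rw [abs_mul, abs_of_pos hD]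
        nlinarith
      have h4 : (SD b (J + 1)).2 * m (J + 1) = m 0 - (SD b (J + 1)).1 := by omega
      rw [h4] at h3
      have h5 : |m 0 - (SD b (J + 1)).1| ≤ |m 0| + |(SD b (J + 1)).1| := abs_sub _ _
      omega
  set K := 2 * (m 0).natAbs + 1 with hK
  have hbig : 2 * |m 0| < (SD b K).2 := by
    have h1 := SD_snd_ge b K
    have h2 : |m 0| = ((m 0).natAbs : ℤ) := Int.abs_eq_natAbs _
    omega
  have hbig' : 2 * |m 0| < (SD b (K + 1)).2 := by
    have h4 := SD_snd_le_succ b K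
    omega
  have e1 : m 0 = (SD b K).1 := pin (2 * (m 0).natAbs) hbig
  have e2 : m 0 = (SD b (K + 1)).1 := pin K hbig'
  have e3 : (SD b (K + 1)).1 = (SD b K).1 + (SD b K).2 * b K := SD_fst_succ b K
  have h5 : (SD b K).2 * b K = 0 := by omega
  exact (mul_ne_zero (by have := SD_snd_pos b K; omega) (hb K)) h5

/-! ### The coinductive tail construction -/

/-- `Tf g d k` is the element with `Tf g d k = g k * (Tf g d (k+1)) ^ d k`,
built coordinatewise. -/
def Tf (g : ℕ → ∀ n, FreeGroup (Fin (n + 1))) (d : ℕ → ℤ) (k n : ℕ) :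
    FreeGroup (Fin (n + 1)) :=
  if h : n ≤ k then 1 else g k n * (Tf g d (k + 1) n) ^ (d k)
termination_by n - k
decreasing_by omega

variable {g : ℕ → ∀ n, FreeGroup (Fin (n + 1))} {d : ℕ → ℤ}

lemma Tf_le {k n : ℕ} (hnk : n ≤ k) : Tf g d k n = 1 := by
  rw [Tf, dif_pos hnk]

lemma Tf_lt {k n : ℕ} (hnk : k < n) :
    Tf g d k n = g k n * (Tf g d (k + 1) n) ^ (d k) := by
  rw [Tf, dif_neg (by omega)]

lemma Tf_step (hg0 : ∀ k n, n ≤ k → g k n = 1) (k n : ℕ) :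
    Tf g d k n = g k n * (Tf g d (k + 1) n) ^ (d k) := by
  by_cases h : n ≤ k
  · rw [Tf_le h, hg0 k n h, Tf_le (show n ≤ k + 1 by omega)]
    simp
  · exact Tf_lt (by omega)

lemma Tf_coh (hg : ∀ k n, bonding n (g k (n + 1)) = g k n)
    (hg0 : ∀ k n, n ≤ k → g k n = 1) :
    ∀ k n, bonding n (Tf g d k (n + 1)) = Tf g d k n := by
  suffices h : ∀ M k n, n - k ≤ M → bonding n (Tf g d k (n + 1)) = Tf g d k n by
    intro k n; exact h (n - k) k n le_rfl
  intro M
  induction M with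
  | zero =>
    intro k n hM
    have hnk : n ≤ k := by omega
    rw [Tf_le hnk]
    by_cases h1 : n + 1 ≤ k
    · rw [Tf_le h1, map_one]
    · have hkn : n = k := by omega
      rw [Tf_lt (show k < n + 1 by omega), Tf_le (show n + 1 ≤ k + 1 by omega),
        one_zpow, mul_one, hg k n, hg0 k n hnk]
  | succ M ih =>
    intro k n hM
    by_cases hnk : n ≤ k
    · exact ih k n (by omega)
    · rw [Tf_lt (show k < n + 1 by omega), Tf_lt (show k < n by omega),
        map_mul, map_zpow, hg k n, ih (k + 1) n (by omega)]

/-! ### Step A: every homomorphism `G1 → ℤ` kills a basic kernel subgroup -/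

lemma stepA (H : G1 →* Multiplicative ℤ) :
    ∃ N, ∀ r : G1, (r : ∀ n, FreeGroup (Fin (n + 1))) N = 1 → H r = 1 := by
  by_contra hc
  push_neg at hc
  choose g hg1 hg2 using hc
  set b : ℕ → ℤ := fun k => Multiplicative.toAdd (H (g k)) with hbdef
  have hbne : ∀ k, b k ≠ 0 := by
    intro k h
    apply hg2 k
    have : H (g k) = Multiplicative.ofAdd 0 := by
      rw [← h]; rfl
    rw [this]; rfl
  set gg : ℕ → ∀ n, FreeGroup (Fin (n + 1)) := fun k => (g k : ∀ n, FreeGroup (Fin (n + 1)))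
    with hggdef
  have hgcoh : ∀ k n, bonding n (gg k (n + 1)) = gg k n := fun k n => (g k).2 n
  have hg0 : ∀ k n, n ≤ k → gg k n = 1 := fun k n h =>
    val_eq_one_down (g k) k (hg1 k) n h
  set d : ℕ → ℤ := df b with hddef
  set t : ℕ → G1 := fun k => ⟨Tf gg d k, Tf_coh hgcoh hg0 k⟩ with htdef
  have ht : ∀ k, t k = g k * (t (k + 1)) ^ (d k) := by
    intro k
    apply Subtype.ext
    funext n
    show Tf gg d k n = ((g k * (t (k + 1)) ^ (d k) : G1) : ∀ n, FreeGroup (Fin (n + 1))) n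
    rw [Tf_step hg0 k n]
    rfl
  set m : ℕ → ℤ := fun k => Multiplicative.toAdd (H (t k)) with hmdef
  have hm : ∀ k, m k = b k + d k * m (k + 1) := by
    intro k
    show Multiplicative.toAdd (H (t k)) = _
    rw [ht k, map_mul, map_zpow, toAdd_mul, toAdd_zpow]
    simp [hbdef, hmdef, smul_eq_mul]
  exact no_such_m b hbne m hm

/-! ### The key lemma and the main theorem -/

lemma ker_phi_killed (H : G1 →* Multiplicative ℤ) (g : G1)
    (hg : ∀ j, tau j j ((g : ∀ n, FreeGroup (Fin (n + 1))) j) = 1) : H g = 1 := by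
  obtain ⟨N, hN⟩ := stepA H
  set w : G1 := sec N ((g : ∀ n, FreeGroup (Fin (n + 1))) N) with hwdef
  have hw : (w : ∀ n, FreeGroup (Fin (n + 1))) N = (g : ∀ n, FreeGroup (Fin (n + 1))) N :=
    sec_val N _
  have hr : H (w⁻¹ * g) = 1 := by
    apply hN
    show ((w⁻¹ * g : G1) : ∀ n, FreeGroup (Fin (n + 1))) N = 1
    rw [Subgroup.coe_mul, Subgroup.coe_inv]
    show ((w : ∀ n, FreeGroup (Fin (n + 1))) N)⁻¹ * (g : ∀ n, FreeGroup (Fin (n + 1))) N = 1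
    rw [hw, inv_mul_cancel]
  have hHw : H w = 1 := by
    have h1 : H w = (H.comp (sec N)) ((g : ∀ n, FreeGroup (Fin (n + 1))) N) := rfl
    rw [h1]
    apply hom_eq_one N
    intro j
    rw [tau_stable (g : ∀ n, FreeGroup (Fin (n + 1))) g.2 j.val N
      (by omega : j.val ≤ N)]
    exact hg j.val
  have : H g = H w * H (w⁻¹ * g) := by
    rw [← map_mul, mul_inv_cancel_left]
  rw [this, hHw, hr, mul_one]

theorem F_of_G1_iso_ZN :
    Nonempty ((Abelianization G1 ⧸
        (⨅ h : Abelianization G1 →* Multiplicative ℤ, h.ker)) ≃*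
      Multiplicative (ℕ → ℤ)) := by
  set Φ : Abelianization G1 →* (ℕ → Multiplicative ℤ) := Abelianization.lift phi with hΦdef
  have hΦof : ∀ g : G1, Φ (Abelianization.of g) = phi g := fun g => Abelianization.lift_apply_of (f := phi) g
  have hofsurj : Function.Surjective (Abelianization.of : G1 → Abelianization G1) := by
    intro x
    exact QuotientGroup.induction_on x fun g => ⟨g, rfl⟩
  have hsurj : Function.Surjective Φ := by
    intro a
    obtain ⟨g, hg⟩ := phi_surjective a
    exact ⟨Abelianization.of g, by rw [hΦof, hg]⟩
  have hker : (⨅ h : Abelianization G1 →* Multiplicative ℤ, h.ker) = Φ.ker := by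
    apply le_antisymm
    · intro x hx
      rw [Subgroup.mem_iInf] at hx
      rw [MonoidHom.mem_ker]
      funext j
      have := hx ((Pi.evalMonoidHom (fun _ : ℕ => Multiplicative ℤ) j).comp Φ)
      rw [MonoidHom.mem_ker, MonoidHom.comp_apply] at this
      exact this
    · intro x hx
      rw [MonoidHom.mem_ker] at hx
      rw [Subgroup.mem_iInf]
      intro h
      rw [MonoidHom.mem_ker]
      obtain ⟨g, rfl⟩ := hofsurj x
      rw [hΦof] at hx
      exact ker_phi_killed (h.comp Abelianization.of) g
        (fun j => congrFun hx j)
  exact ⟨(QuotientGroup.quotientMulEquivOfEq hker).trans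
    ((QuotientGroup.quotientKerEquivOfSurjective Φ hsurj).trans
      (MulEquiv.piMultiplicative (fun _ : ℕ => ℤ)).symm)⟩
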